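/- Let g₀ be a non-decreasing nonnegative real-valued function on [0, +∞). Then there exists a function g on [0, +∞) which is convex, increasing, and real analytic (given on all of ℝ by an everywhere-convergent power series with nonnegative coefficients), such that g''(x) ≥ g'(x) ≥ g(x) ≥ g₀(x) for all x ∈ [0, +∞). -/

import Mathlib

open MeasureTheory Filter Metric Set
open scoped ENNReal NNReal Topology ComplexOrder

noncomputable section

namespace ExistsAnalyticConvexMajorantAux

open Finset
open scoped Nat

/-- Tail of the exponential series bound. -/
private lemma tail_sum_le (x : ℝ) (hx : 0 ≤ x) (N K : ℕ) :
    ∑ n ∈ Finset.Ico N K, x ^ n / n ! ≤ x ^ N / N ! * Real.exp x := by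
  rcases le_or_gt K N with h | h
  · rw [Finset.Ico_eq_empty (by omega)]
    simp only [Finset.sum_empty]
    positivity
  · rw [Finset.sum_Ico_eq_sum_range]
    have key : ∀ j : ℕ, x ^ (N + j) / (N + j)! ≤ x ^ N / N ! * (x ^ j / j !) := by
      intro j
      rw [pow_add, div_mul_div_comm]
      gcongr
      exact_mod_cast Nat.le_of_dvd (Nat.factorial_pos _)
          (Nat.factorial_mul_factorial_dvd_factorial_add N j)
    calc ∑ j ∈ Finset.range (K - N), x ^ (N + j) / (N + j)!
        ≤ ∑ j ∈ Finset.range (K - N), x ^ N / N ! * (x ^ j / j !) :=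
          Finset.sum_le_sum fun j _ => key j
      _ = x ^ N / N ! * ∑ j ∈ Finset.range (K - N), x ^ j / j ! := by rw [Finset.mul_sum]
      _ ≤ x ^ N / N ! * Real.exp x := by
          gcongr
          exact Real.sum_le_exp_of_nonneg hx _

private lemma cast_le_two_pow (n : ℕ) : (n : ℝ) ≤ 2 ^ n := by
  calc (n : ℝ) ≤ ((2 ^ n : ℕ) : ℝ) := by exact_mod_cast (Nat.lt_two_pow_self (n := n)).le
    _ = 2 ^ n := by push_cast; ring

variable {A : ℕ → ℝ}

private lemma summable_all (hA : ∀ n, 0 ≤ A n)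
    (h : ∀ x : ℝ, 0 ≤ x → Summable fun n => A n * x ^ n / n !) (x : ℝ) :
    Summable fun n => A n * x ^ n / n ! := by
  refine Summable.of_norm_bounded (h |x| (abs_nonneg x)) fun n => ?_
  rw [Real.norm_eq_abs, abs_div, abs_mul, abs_pow, abs_of_nonneg (hA n), Nat.abs_cast]

private lemma summable_shift (hA : ∀ n, 0 ≤ A n)
    (h : ∀ x : ℝ, 0 ≤ x → Summable fun n => A n * x ^ n / n !) :
    ∀ x : ℝ, 0 ≤ x → Summable fun n => A (n + 1) * x ^ n / n ! := by
  intro x hx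
  set y : ℝ := 2 * max x 1 with hy
  have hy1 : 1 ≤ y := by
    have : (1 : ℝ) ≤ max x 1 := le_max_right _ _
    nlinarith
  have h1 : Summable fun n => A (n + 1) * y ^ (n + 1) / (n + 1)! :=
    (summable_nat_add_iff 1).2 (h y (by linarith))
  refine Summable.of_nonneg_of_le (fun n => div_nonneg (mul_nonneg (hA _) (pow_nonneg hx _)) (Nat.cast_nonneg _)) (fun n => ?_) h1
  have hfac : ((n + 1)! : ℝ) = (n + 1) * n ! := by
    rw [Nat.factorial_succ]; push_cast; ring
  have hxy : ((n : ℝ) + 1) * x ^ n ≤ y ^ (n + 1) := by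
    have h2 : ((n : ℝ) + 1) ≤ 2 ^ (n + 1) := by
      have := cast_le_two_pow (n + 1)
      push_cast at this ⊢; linarith
    have h3 : x ^ n ≤ (max x 1) ^ (n + 1) := by
      calc x ^ n ≤ (max x 1) ^ n := pow_le_pow_left₀ hx (le_max_left _ _) n
        _ ≤ (max x 1) ^ (n + 1) := pow_le_pow_right₀ (le_max_right _ _) (by omega)
    calc ((n : ℝ) + 1) * x ^ n ≤ 2 ^ (n + 1) * (max x 1) ^ (n + 1) := by
          apply mul_le_mul h2 h3 (by positivity) (by positivity)
      _ = y ^ (n + 1) := by rw [hy, mul_pow]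
  calc A (n + 1) * x ^ n / n !
      = A (n + 1) * (((n : ℝ) + 1) * x ^ n) / (n + 1)! := by
        rw [hfac]; field_simp
    _ ≤ A (n + 1) * y ^ (n + 1) / (n + 1)! := by gcongr; exact hA _
  -- done

private lemma hasDerivAt_G (hA : ∀ n, 0 ≤ A n)
    (h : ∀ x : ℝ, 0 ≤ x → Summable fun n => A n * x ^ n / n !) (x : ℝ) :
    HasDerivAt (fun y : ℝ => ∑' n, A n * y ^ n / n !)
      (∑' n, A (n + 1) * x ^ n / n !) x := by
  set R : ℝ := |x| + 1 with hR
  have hR1 : (1 : ℝ) ≤ R := by have := abs_nonneg x; linarith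
  have hR0 : (0 : ℝ) < R := by linarith
  set u : ℕ → ℝ := fun n => A n * ((n : ℝ) * R ^ (n - 1)) / n ! with hu_def
  have hu : Summable u := by
    refine Summable.of_nonneg_of_le (fun n => div_nonneg (mul_nonneg (hA _) (mul_nonneg (Nat.cast_nonneg _) (pow_nonneg (by linarith) _))) (Nat.cast_nonneg _)) (fun n => ?_)
      (h (2 * R) (by linarith))
    have hb : (n : ℝ) * R ^ (n - 1) ≤ (2 * R) ^ n := by
      rcases Nat.eq_zero_or_pos n with rfl | hn
      · simp
      · have h1 : R ^ (n - 1) ≤ R ^ n := pow_le_pow_right₀ hR1 (by omega)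
        calc (n : ℝ) * R ^ (n - 1) ≤ 2 ^ n * R ^ n := by
              apply mul_le_mul (cast_le_two_pow n) h1 (by positivity) (by positivity)
          _ = (2 * R) ^ n := (mul_pow 2 R n).symm
    show A n * ((n : ℝ) * R ^ (n - 1)) / (n ! : ℝ) ≤ A n * (2 * R) ^ n / (n ! : ℝ)
    gcongr
    exact hA n
  have hder : ∀ (n : ℕ) (y : ℝ), y ∈ ball (0 : ℝ) R →
      HasDerivAt (fun z : ℝ => A n * z ^ n / n !) (A n * ((n : ℝ) * y ^ (n - 1)) / n !) y :=
    fun n y _ => ((hasDerivAt_pow n y).const_mul (A n)).div_const _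
  have hbound : ∀ (n : ℕ) (y : ℝ), y ∈ ball (0 : ℝ) R →
      ‖A n * ((n : ℝ) * y ^ (n - 1)) / (n ! : ℝ)‖ ≤ u n := by
    intro n y hy
    rw [mem_ball_zero_iff, Real.norm_eq_abs] at hy
    rw [Real.norm_eq_abs, abs_div, abs_mul, abs_mul, abs_pow, abs_of_nonneg (hA n),
      Nat.abs_cast, Nat.abs_cast]
    show A n * ((n : ℝ) * |y| ^ (n - 1)) / (n ! : ℝ) ≤ A n * ((n : ℝ) * R ^ (n - 1)) / (n ! : ℝ)
    gcongr
    exact hA n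
  have hx : x ∈ ball (0 : ℝ) R := by
    rw [mem_ball_zero_iff, Real.norm_eq_abs]; linarith
  have H := hasDerivAt_tsum_of_isPreconnected hu isOpen_ball
    (convex_ball (0 : ℝ) R).isPreconnected hder hbound (mem_ball_self hR0)
    (h 0 le_rfl) hx
  have hs : Summable fun n => A n * ((n : ℝ) * x ^ (n - 1)) / n ! :=
    Summable.of_norm_bounded hu fun n => hbound n x hx
  have hvalue : (∑' n, A n * ((n : ℝ) * x ^ (n - 1)) / n !)
      = ∑' n, A (n + 1) * x ^ n / n ! := by
    rw [Summable.tsum_eq_zero_add hs]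
    simp only [Nat.cast_zero, zero_mul, mul_zero, zero_div, zero_add, Nat.add_sub_cancel]
    refine tsum_congr fun n => ?_
    have hfac : ((n + 1)! : ℝ) = (n + 1) * n ! := by
      rw [Nat.factorial_succ]; push_cast; ring
    push_cast
    rw [hfac]
    field_simp
  rw [← hvalue]
  exact H

private lemma deriv_G (hA : ∀ n, 0 ≤ A n)
    (h : ∀ x : ℝ, 0 ≤ x → Summable fun n => A n * x ^ n / n !) :
    deriv (fun y : ℝ => ∑' n, A n * y ^ n / n !)
      = fun x : ℝ => ∑' n, A (n + 1) * x ^ n / n ! :=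
  funext fun x => (hasDerivAt_G hA h x).deriv

section Construction

variable (g₀ : ℝ → ℝ)

private def cF (m : ℕ) : ℝ := g₀ (m + 1) + 1

private def KF (m : ℕ) : ℕ := Nat.clog 2 ⌈cF g₀ m⌉₊

private def NF (m : ℕ) : ℕ := if m = 0 then 0 else m + KF g₀ m

private def MF (m : ℕ) : ℝ := ((max m 1 : ℕ) : ℝ)

private def dF (m : ℕ) : ℝ := cF g₀ m * (NF g₀ m)! / (MF m) ^ NF g₀ m

private def aF (n : ℕ) : ℝ :=
  ∑ m ∈ Finset.range (n + 1), if NF g₀ m ≤ n then dF g₀ m else 0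

variable (hpos : ∀ x, 0 ≤ x → 0 ≤ g₀ x)

private lemma MF_one_le (m : ℕ) : 1 ≤ MF m := by
  rw [MF]
  exact_mod_cast Nat.one_le_iff_ne_zero.2 (by omega)

private lemma MF_pos (m : ℕ) : 0 < MF m := lt_of_lt_of_le one_pos (MF_one_le m)

include hpos

private lemma cF_one_le (m : ℕ) : 1 ≤ cF g₀ m := by
  have := hpos (m + 1) (by positivity)
  rw [cF]; push_cast; linarith

private lemma cF_le_pow (m : ℕ) : cF g₀ m ≤ 2 ^ KF g₀ m := by
  calc cF g₀ m ≤ (⌈cF g₀ m⌉₊ : ℝ) := Nat.le_ceil _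
    _ ≤ ((2 ^ KF g₀ m : ℕ) : ℝ) := by exact_mod_cast Nat.le_pow_clog one_lt_two _
    _ = 2 ^ KF g₀ m := by push_cast; ring

private lemma dF_nonneg (m : ℕ) : 0 ≤ dF g₀ m := by
  rw [dF]
  have h1 := cF_one_le g₀ hpos m
  have h2 := MF_pos m
  positivity

omit hpos

private lemma NF_ge (m : ℕ) : m ≤ NF g₀ m := by
  rw [NF]; split <;> omega

include hpos

private lemma aF_nonneg (n : ℕ) : 0 ≤ aF g₀ n := by
  rw [aF]
  refine Finset.sum_nonneg fun m _ => ?_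
  split
  · exact dF_nonneg g₀ hpos m
  · exact le_rfl

private lemma aF_mono : Monotone (aF g₀) := by
  refine monotone_nat_of_le_succ fun n => ?_
  rw [aF, aF]
  calc ∑ m ∈ Finset.range (n + 1), (if NF g₀ m ≤ n then dF g₀ m else 0)
      ≤ ∑ m ∈ Finset.range (n + 1), (if NF g₀ m ≤ n + 1 then dF g₀ m else 0) := by
        refine Finset.sum_le_sum fun m _ => ?_
        split <;> split
        · exact le_rfl
        · omega
        · exact dF_nonneg g₀ hpos m
        · exact le_rfl
    _ ≤ ∑ m ∈ Finset.range (n + 2), (if NF g₀ m ≤ n + 1 then dF g₀ m else 0) := by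
        refine Finset.sum_le_sum_of_subset_of_nonneg
          (Finset.range_subset_range.2 (by omega)) fun m _ _ => ?_
        split
        · exact dF_nonneg g₀ hpos m
        · exact le_rfl

private lemma dF_le_aF (m : ℕ) : dF g₀ m ≤ aF g₀ (NF g₀ m) := by
  rw [aF]
  have hm : m ∈ Finset.range (NF g₀ m + 1) := Finset.mem_range.2 (by
    have := NF_ge g₀ m; omega)
  have := Finset.single_le_sum
    (f := fun k => if NF g₀ k ≤ NF g₀ m then dF g₀ k else 0)
    (fun k _ => by split; exacts [dF_nonneg g₀ hpos k, le_rfl]) hm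
  simpa using this

private lemma summable_aF : ∀ x : ℝ, 0 ≤ x → Summable fun n => aF g₀ n * x ^ n / n ! := by
  intro x hx
  set y : ℝ := max x 1 with hy
  have hy1 : (1 : ℝ) ≤ y := le_max_right _ _
  have hxy : x ≤ y := le_max_left _ _
  set M₀ : ℕ := ⌈2 * x⌉₊ with hM₀
  set S : ℝ := ∑ m ∈ Finset.range (M₀ + 1), cF g₀ m * y ^ NF g₀ m with hS
  have hS0 : 0 ≤ S := Finset.sum_nonneg fun m _ =>
    mul_nonneg (by linarith [cF_one_le g₀ hpos m]) (by positivity)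
  refine summable_of_sum_range_le
    (c := (S + 2) * Real.exp x)
    (fun n => div_nonneg (mul_nonneg (aF_nonneg g₀ hpos n) (pow_nonneg hx _))
      (Nat.cast_nonneg _)) fun K => ?_
  have key : ∀ m ∈ Finset.range K,
      dF g₀ m * ∑ n ∈ Finset.Ico (NF g₀ m) K, x ^ n / n !
        ≤ (if m ≤ M₀ then cF g₀ m * y ^ NF g₀ m else (1 / 2 : ℝ) ^ m) * Real.exp x := by
    intro m _
    have step1 : dF g₀ m * ∑ n ∈ Finset.Ico (NF g₀ m) K, x ^ n / n !
        ≤ dF g₀ m * (x ^ NF g₀ m / (NF g₀ m)! * Real.exp x) := by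
      exact mul_le_mul_of_nonneg_left (tail_sum_le x hx _ _) (dF_nonneg g₀ hpos m)
    have step2 : dF g₀ m * (x ^ NF g₀ m / (NF g₀ m)! * Real.exp x)
        = (cF g₀ m * (x / MF m) ^ NF g₀ m) * Real.exp x := by
      rw [dF, div_pow]
      have h1 : ((NF g₀ m)! : ℝ) ≠ 0 := by exact_mod_cast (Nat.factorial_pos _).ne'
      have h2 : (MF m) ^ NF g₀ m ≠ 0 := by
        have := MF_pos m; positivity
      field_simp
    have step3 : cF g₀ m * (x / MF m) ^ NF g₀ m
        ≤ if m ≤ M₀ then cF g₀ m * y ^ NF g₀ m else (1 / 2 : ℝ) ^ m := by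
      have hc0 : 0 ≤ cF g₀ m := by linarith [cF_one_le g₀ hpos m]
      have hdiv0 : 0 ≤ x / MF m := div_nonneg hx (MF_pos m).le
      split
      · -- small m : bound by y ^ N
        refine mul_le_mul_of_nonneg_left (pow_le_pow_left₀ hdiv0 ?_ _) hc0
        exact le_trans (div_le_self hx (MF_one_le m)) hxy
      · -- large m
        rename_i hm
        have hm1 : 1 ≤ m := by
          rcases Nat.eq_zero_or_pos m with rfl | h
          · omega
          · omega
        have hMm : MF m = (m : ℝ) := by
          rw [MF]; congr 1; omega
        have hNm : NF g₀ m = m + KF g₀ m := by rw [NF]; split <;> omega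
        have hmx : 2 * x ≤ (m : ℝ) := by
          have h1 : (2 : ℝ) * x ≤ (M₀ : ℝ) := Nat.le_ceil _
          have h2 : (M₀ : ℝ) ≤ (m : ℝ) := by exact_mod_cast (by omega : M₀ ≤ m)
          linarith
        have hhalf : x / MF m ≤ 1 / 2 := by
          rw [hMm, div_le_div_iff₀ (by exact_mod_cast hm1) two_pos]
          linarith
        calc cF g₀ m * (x / MF m) ^ NF g₀ m
            ≤ cF g₀ m * (1 / 2 : ℝ) ^ NF g₀ m :=
              mul_le_mul_of_nonneg_left (pow_le_pow_left₀ hdiv0 hhalf _) hc0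
          _ = cF g₀ m * (1 / 2 : ℝ) ^ KF g₀ m * (1 / 2 : ℝ) ^ m := by
              rw [hNm, pow_add]; ring
          _ ≤ 1 * (1 / 2 : ℝ) ^ m := by
              refine mul_le_mul_of_nonneg_right ?_ (by positivity)
              rw [one_div, inv_pow, ← div_eq_mul_inv, div_le_one (by positivity)]
              exact cF_le_pow g₀ hpos m
          _ = (1 / 2 : ℝ) ^ m := one_mul _
    calc dF g₀ m * ∑ n ∈ Finset.Ico (NF g₀ m) K, x ^ n / n !
        ≤ dF g₀ m * (x ^ NF g₀ m / (NF g₀ m)! * Real.exp x) := step1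
      _ = (cF g₀ m * (x / MF m) ^ NF g₀ m) * Real.exp x := step2
      _ ≤ (if m ≤ M₀ then cF g₀ m * y ^ NF g₀ m else (1 / 2 : ℝ) ^ m) * Real.exp x :=
          mul_le_mul_of_nonneg_right step3 (Real.exp_pos x).le
  calc ∑ n ∈ Finset.range K, aF g₀ n * x ^ n / n !
      = ∑ n ∈ Finset.range K, ∑ m ∈ Finset.range K,
          (if NF g₀ m ≤ n then dF g₀ m * (x ^ n / n !) else 0) := by
        refine Finset.sum_congr rfl fun n hn => ?_
        rw [aF]
        calc (∑ m ∈ Finset.range (n + 1), if NF g₀ m ≤ n then dF g₀ m else 0) * x ^ n / n !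
            = ∑ m ∈ Finset.range (n + 1),
                (if NF g₀ m ≤ n then dF g₀ m * (x ^ n / n !) else 0) := by
              rw [Finset.sum_mul, Finset.sum_div]
              refine Finset.sum_congr rfl fun m _ => ?_
              split <;> simp [mul_div_assoc]
          _ = ∑ m ∈ Finset.range K,
                (if NF g₀ m ≤ n then dF g₀ m * (x ^ n / n !) else 0) := by
              refine Finset.sum_subset (Finset.range_subset_range.2 (Finset.mem_range.1 hn))
                fun m hmK hmn => ?_
              rw [if_neg]
              have h1 := NF_ge g₀ m
              simp only [Finset.mem_range] at hmK hmn
              omega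
    _ = ∑ m ∈ Finset.range K, dF g₀ m * ∑ n ∈ Finset.Ico (NF g₀ m) K, x ^ n / n ! := by
        rw [Finset.sum_comm]
        refine Finset.sum_congr rfl fun m _ => ?_
        rw [Finset.mul_sum, ← Finset.sum_filter]
        congr 1
        ext n
        simp only [Finset.mem_filter, Finset.mem_range, Finset.mem_Ico]
        omega
    _ ≤ ∑ m ∈ Finset.range K,
          (if m ≤ M₀ then cF g₀ m * y ^ NF g₀ m else (1 / 2 : ℝ) ^ m) * Real.exp x :=
        Finset.sum_le_sum key
    _ ≤ (S + 2) * Real.exp x := by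
        rw [← Finset.sum_mul]
        refine mul_le_mul_of_nonneg_right ?_ (Real.exp_pos x).le
        calc ∑ m ∈ Finset.range K,
              (if m ≤ M₀ then cF g₀ m * y ^ NF g₀ m else (1 / 2 : ℝ) ^ m)
            ≤ ∑ m ∈ Finset.range K,
              ((if m ≤ M₀ then cF g₀ m * y ^ NF g₀ m else 0) + (1 / 2 : ℝ) ^ m) := by
              refine Finset.sum_le_sum fun m _ => ?_
              have hc0 : 0 ≤ cF g₀ m * y ^ NF g₀ m :=
                mul_nonneg (by linarith [cF_one_le g₀ hpos m]) (by positivity)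
              split <;> simp <;> positivity
          _ = (∑ m ∈ Finset.range K, (if m ≤ M₀ then cF g₀ m * y ^ NF g₀ m else 0))
              + ∑ m ∈ Finset.range K, (1 / 2 : ℝ) ^ m := Finset.sum_add_distrib
          _ ≤ S + 2 := by
              refine add_le_add ?_ (sum_geometric_two_le K)
              rw [hS, ← Finset.sum_filter]
              refine Finset.sum_le_sum_of_subset_of_nonneg ?_ fun m _ _ =>
                mul_nonneg (by linarith [cF_one_le g₀ hpos m]) (by positivity)
              intro m hm
              simp only [Finset.mem_filter, Finset.mem_range] at hm ⊢
              omega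

end Construction

end ExistsAnalyticConvexMajorantAux

open ExistsAnalyticConvexMajorantAux in
open scoped Nat in
/-- Every non-decreasing nonnegative function `g₀` on `[0,∞)` is dominated
by a convex, increasing function `g` given on all of `ℝ` by an everywhere-convergent power
series with nonnegative coefficients, satisfying `g'' ≥ g' ≥ g ≥ g₀` on `[0,∞)`. -/
theorem exists_analytic_convex_majorant
    (g₀ : ℝ → ℝ) (hmono : MonotoneOn g₀ (Set.Ici 0)) (hpos : ∀ x, 0 ≤ x → 0 ≤ g₀ x) :
    ∃ (b : ℕ → ℝ) (g : ℝ → ℝ),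
      (∀ n, 0 ≤ b n) ∧
      (∀ x : ℝ, HasSum (fun n => b n * x ^ n) (g x)) ∧
      ConvexOn ℝ (Set.Ici 0) g ∧
      MonotoneOn g (Set.Ici 0) ∧
      ∀ x : ℝ, 0 ≤ x →
        g₀ x ≤ g x ∧ g x ≤ deriv g x ∧ deriv g x ≤ deriv (deriv g) x := by
  classical
  have ha0 : ∀ n, 0 ≤ aF g₀ n := aF_nonneg g₀ hpos
  have ha0' : ∀ n, 0 ≤ aF g₀ (n + 1) := fun n => ha0 (n + 1)
  have hamono := aF_mono g₀ hpos
  have hsum : ∀ x : ℝ, 0 ≤ x → Summable fun n => aF g₀ n * x ^ n / n ! :=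
    summable_aF g₀ hpos
  have hsum1 : ∀ x : ℝ, 0 ≤ x → Summable fun n => aF g₀ (n + 1) * x ^ n / n ! :=
    summable_shift ha0 hsum
  have hsum2 : ∀ x : ℝ, 0 ≤ x → Summable fun n => aF g₀ (n + 2) * x ^ n / n ! :=
    summable_shift (A := fun n => aF g₀ (n + 1)) ha0' hsum1
  have hderiv1 : deriv (fun y : ℝ => ∑' n, aF g₀ n * y ^ n / n !)
      = fun x : ℝ => ∑' n, aF g₀ (n + 1) * x ^ n / n ! := deriv_G ha0 hsum
  have hderiv2 : deriv (deriv (fun y : ℝ => ∑' n, aF g₀ n * y ^ n / n !))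
      = fun x : ℝ => ∑' n, aF g₀ (n + 2) * x ^ n / n ! := by
    rw [hderiv1]
    exact deriv_G (A := fun n => aF g₀ (n + 1)) ha0' hsum1
  have hdiff : Differentiable ℝ (fun y : ℝ => ∑' n, aF g₀ n * y ^ n / n !) :=
    fun x => (hasDerivAt_G ha0 hsum x).differentiableAt
  have hdiff' : Differentiable ℝ (deriv (fun y : ℝ => ∑' n, aF g₀ n * y ^ n / n !)) := by
    rw [hderiv1]
    exact fun x =>
      (hasDerivAt_G (A := fun n => aF g₀ (n + 1)) ha0' hsum1 x).differentiableAt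
  refine ⟨fun n => aF g₀ n / n !, fun y : ℝ => ∑' n, aF g₀ n * y ^ n / n !,
    fun n => div_nonneg (ha0 n) (Nat.cast_nonneg _), ?_, ?_, ?_, ?_⟩
  · -- HasSum
    intro x
    have h := (summable_all ha0 hsum x).hasSum
    have he : (fun n => aF g₀ n / n ! * x ^ n) = fun n => aF g₀ n * x ^ n / n ! :=
      funext fun n => div_mul_eq_mul_div _ _ _
    rw [he]
    exact h
  · -- ConvexOn
    refine convexOn_of_deriv2_nonneg (convex_Ici 0) hdiff.continuous.continuousOn
      hdiff.differentiableOn hdiff'.differentiableOn fun x hx => ?_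
    rw [interior_Ici] at hx
    have hx0 : (0 : ℝ) ≤ x := le_of_lt hx
    show (0 : ℝ) ≤ deriv (deriv (fun y : ℝ => ∑' n, aF g₀ n * y ^ n / n !)) x
    rw [hderiv2]
    exact tsum_nonneg fun n =>
      div_nonneg (mul_nonneg (ha0 (n + 2)) (pow_nonneg hx0 _)) (Nat.cast_nonneg _)
  · -- MonotoneOn
    refine monotoneOn_of_deriv_nonneg (convex_Ici 0) hdiff.continuous.continuousOn
      hdiff.differentiableOn fun x hx => ?_
    rw [interior_Ici] at hx
    have hx0 : (0 : ℝ) ≤ x := le_of_lt hx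
    rw [hderiv1]
    exact tsum_nonneg fun n =>
      div_nonneg (mul_nonneg (ha0 (n + 1)) (pow_nonneg hx0 _)) (Nat.cast_nonneg _)
  · -- inequalities
    intro x hx
    refine ⟨?_, ?_, ?_⟩
    · -- g₀ x ≤ g x
      set m := ⌊x⌋₊ with hm
      have hx1 : x ≤ (m : ℝ) + 1 := (Nat.lt_floor_add_one x).le
      have hg1 : g₀ x ≤ cF g₀ m := by
        have h1 : ((m : ℝ) + 1) ∈ Set.Ici (0 : ℝ) := by
          simp only [Set.mem_Ici]; positivity
        have := hmono (Set.mem_Ici.2 hx) h1 hx1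
        rw [cF]
        push_cast
        linarith
      have hfac : (0 : ℝ) < (NF g₀ m)! := by exact_mod_cast Nat.factorial_pos _
      have heq : dF g₀ m * x ^ NF g₀ m / (NF g₀ m)!
          = cF g₀ m * (x / MF m) ^ NF g₀ m := by
        rw [dF, div_pow]
        have h2 : (MF m) ^ NF g₀ m ≠ 0 := by have := MF_pos m; positivity
        field_simp
      have hpow1 : (1 : ℝ) ≤ (x / MF m) ^ NF g₀ m := by
        rcases Nat.eq_zero_or_pos m with h0 | h0
        · rw [NF, if_pos h0, pow_zero]
        · have hMm : MF m = (m : ℝ) := by rw [MF]; congr 1; omega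
          have hmx : (m : ℝ) ≤ x := Nat.floor_le hx
          have hm0 : (0 : ℝ) < (m : ℝ) := by exact_mod_cast h0
          refine one_le_pow₀ ?_
          rw [hMm, le_div_iff₀ hm0, one_mul]
          exact hmx
      have hterm : cF g₀ m ≤ dF g₀ m * x ^ NF g₀ m / (NF g₀ m)! := by
        rw [heq]
        have hc0 : 0 ≤ cF g₀ m := by linarith [cF_one_le g₀ hpos m]
        nlinarith
      have hstep : dF g₀ m * x ^ NF g₀ m / (NF g₀ m)!
          ≤ aF g₀ (NF g₀ m) * x ^ NF g₀ m / (NF g₀ m)! := by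
        gcongr
        exact dF_le_aF g₀ hpos m
      have hfinal : aF g₀ (NF g₀ m) * x ^ NF g₀ m / (NF g₀ m)!
          ≤ ∑' n, aF g₀ n * x ^ n / n ! :=
        Summable.le_tsum (hsum x hx) (NF g₀ m) fun j _ =>
          div_nonneg (mul_nonneg (ha0 j) (pow_nonneg hx _)) (Nat.cast_nonneg _)
      linarith
    · -- g ≤ g'
      rw [hderiv1]
      refine Summable.tsum_le_tsum (fun n => ?_) (hsum x hx) (hsum1 x hx)
      gcongr
      exact hamono (Nat.le_succ n)
    · -- g' ≤ g''
      rw [hderiv2, hderiv1]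
      refine Summable.tsum_le_tsum (fun n => ?_) (hsum1 x hx) (hsum2 x hx)
      gcongr
      exact hamono (by omega : n + 1 ≤ n + 2)

end
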